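/- For words y₁, z₁, …, y_l, z_l, u₁, …, u_l over Σ (separator-free) and any p ∈ ℕ, define the map F(γ) = y₁ · (γ ⊗ (z₁1y₂, z₂1y₃, …, z_{l−1}1y_l)) · z_l on words γ of rank l−1. Then the p-fold iterate of F applied to a word γ of rank l−1 equals y₁ᵖ · (γ ⊗ (z₁ᵖ1y₂ᵖ, …, z_{l−1}ᵖ1y_lᵖ)) · z_lᵖ. In particular, applying the p-fold iterate to γ = u₁1u₂1…1u_l yields y₁ᵖu₁z₁ᵖ 1 y₂ᵖu₂z₂ᵖ 1 … 1 y_lᵖu_lz_lᵖ. -/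

import Mathlib

/-- Words over `Σ₁ = Σ ∪ {1}`: the separator `1` is `none`; the rank of a word
is the number of occurrences of the separator. -/
def rk {α : Type*} (w : List (Option α)) : ℕ := w.countP (·.isNone)

/-- `icl u j v` is the intercalation `u ⊙_j v`: replace the `j`-th occurrence
(counting from 1) of the separator in `u` by the word `v`. -/
def icl {α : Type*} : List (Option α) → ℕ → List (Option α) → List (Option α)
  | [], _, _ => []
  | none :: t, j, v => if j = 1 then v ++ t else none :: icl t (j - 1) v
  | some a :: t, j, v => some a :: icl t j v

/-- Simultaneous substitution `γ ⊗ (v₁, …, v_m)`: replace the `i`-th occurrence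
of the separator in `γ` by the word `vᵢ` (which may itself contain separators). -/
def substG {α : Type*} : List (Option α) → List (List (Option α)) → List (Option α)
  | [], _ => []
  | none :: t, v :: vs => v ++ substG t vs
  | none :: t, [] => none :: substG t []
  | some a :: t, vs => some a :: substG t vs

/-- `w^p` for a separator-free word `w`. -/
def wpow {α : Type*} (w : List α) (p : ℕ) : List α := (List.replicate p w).flatten

section Aux
variable {α : Type*}

@[simp] lemma wpow_zero (w : List α) : wpow w 0 = [] := rfl
lemma wpow_succ (w : List α) (p : ℕ) : wpow w (p+1) = w ++ wpow w p := by
  simp [wpow, List.replicate_succ]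
lemma wpow_succ' (w : List α) (p : ℕ) : wpow w (p+1) = wpow w p ++ w := by
  simp [wpow, List.replicate_succ']

@[simp] lemma rk_nil : rk ([] : List (Option α)) = 0 := rfl
@[simp] lemma rk_cons_none (t : List (Option α)) : rk (none :: t) = rk t + 1 := by
  simp [rk, List.countP_cons]
@[simp] lemma rk_cons_some (a : α) (t : List (Option α)) : rk (some a :: t) = rk t := by
  simp [rk, List.countP_cons]
@[simp] lemma rk_append (a b : List (Option α)) : rk (a ++ b) = rk a + rk b := by
  simp [rk, List.countP_append]
@[simp] lemma rk_map_some (w : List α) : rk (w.map some) = 0 := by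
  induction w <;> simp_all

@[simp] lemma substG_nil_left (V : List (List (Option α))) :
    substG ([] : List (Option α)) V = [] := rfl

@[simp] lemma substG_nil_right : ∀ t : List (Option α), substG t [] = t
  | [] => rfl
  | none :: t => by simp [substG, substG_nil_right t]
  | some a :: t => by simp [substG, substG_nil_right t]

lemma substG_ones : ∀ (γ : List (Option α)) (V : List (List (Option α))),
    (∀ v ∈ V, v = [none]) → substG γ V = γ
  | [], _, _ => rfl
  | none :: t, [], _ => by simp
  | none :: t, v :: vs, h => by
    have := h v (by simp); subst this
    simp [substG, substG_ones t vs (fun v hv => h v (by simp [hv]))]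
  | some a :: t, vs, h => by simp [substG, substG_ones t vs h]

lemma substG_append : ∀ (a b : List (Option α)) (V : List (List (Option α))),
    substG (a ++ b) V = substG a (V.take (rk a)) ++ substG b (V.drop (rk a))
  | [], b, V => by simp [substG]
  | some x :: a, b, V => by simp [substG, substG_append a b V]
  | none :: a, b, [] => by simp [substG, substG_append a b []]
  | none :: a, b, w :: V => by simp [substG, substG_append a b V]

lemma substG_sepfree_left (w : List α) (t : List (Option α)) (V : List (List (Option α))) :
    substG (w.map some ++ t) V = w.map some ++ substG t V := by
  rw [substG_append]; simp

@[simp] lemma substG_sepfree (w : List α) (V : List (List (Option α))) :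
    substG (w.map some) V = w.map some := by
  have := substG_sepfree_left w [] V; simpa using this

lemma rk_substG : ∀ (γ : List (Option α)) (V : List (List (Option α))),
    rk γ = V.length → (∀ v ∈ V, rk v = 1) → rk (substG γ V) = V.length
  | [], V, h, _ => by simp at h ⊢; omega
  | none :: t, [], h, _ => by simp at h
  | none :: t, v :: V, h, hv => by
    simp [substG, rk_substG t V (by simpa using h) (fun x hx => hv x (by simp [hx])),
      hv v (by simp)]
    omega
  | some a :: t, V, h, hv => by
    simp [substG, rk_substG t V (by simpa using h) hv]

lemma substG_substG : ∀ (γ : List (Option α)) (V W : List (List (Option α))),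
    rk γ = V.length → V.length = W.length → (∀ v ∈ V, rk v = 1) →
    substG (substG γ V) W = substG γ (List.zipWith (fun v w => substG v [w]) V W)
  | [], V, W, h, h2, hv => by simp [substG]
  | none :: t, [], W, h, h2, hv => by simp at h
  | none :: t, v :: V, [], h, h2, hv => by simp at h2
  | none :: t, v :: V, w :: W, h, h2, hv => by
    have hv1 : rk v = 1 := hv v (by simp)
    simp only [substG, List.zipWith_cons_cons]
    rw [substG_append, hv1]
    simp only [List.take_succ_cons, List.take_zero, List.drop_succ_cons, List.drop_zero]
    rw [substG_substG t V W (by simpa using h) (by simpa using h2)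
      (fun x hx => hv x (by simp [hx]))]
  | some a :: t, V, W, h, h2, hv => by
    simp [substG, substG_substG t V W (by simpa using h) h2 hv]

lemma zipWith_map_range {β : Type*} (f g : ℕ → β) (h : β → β → β) (n : ℕ) :
    List.zipWith h ((List.range n).map f) ((List.range n).map g)
      = (List.range n).map (fun i => h (f i) (g i)) := by
  induction n with
  | zero => simp
  | succ n ih =>
    rw [List.range_succ, List.map_append, List.map_append, List.map_append,
      List.zipWith_append (by simp), ih]
    simp

lemma intercalate_cons (x : Option α) (a b : List (Option α)) (l : List (List (Option α))) :
    List.intercalate [x] (a :: b :: l) = a ++ x :: List.intercalate [x] (b :: l) := by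
  simp [List.intercalate, List.intersperse]

lemma intercalate_cons' (x : Option α) (a : List (Option α)) (l : List (List (Option α)))
    (h : l ≠ []) :
    List.intercalate [x] (a :: l) = a ++ x :: List.intercalate [x] l := by
  cases l with
  | nil => exact absurd rfl h
  | cons b l => exact intercalate_cons x a b l

lemma map_range_succ {β : Type*} (n : ℕ) (f : ℕ → β) :
    (List.range (n+1)).map f = f 0 :: (List.range n).map (fun i => f (i+1)) := by
  rw [List.range_succ_eq_map, List.map_cons, List.map_map]; rfl

lemma mrs1 (n : ℕ) (u : ℕ → List α) :
    (List.range (n+1)).map (fun i => (u i).map some)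
      = (u 0).map some :: (List.range n).map (fun i => (u (i+1)).map some) := by
  rw [map_range_succ]

lemma mrs3 (n : ℕ) (y u z : ℕ → List α) :
    (List.range (n+1)).map (fun i => (y i).map some ++ (u i).map some ++ (z i).map some)
      = ((y 0).map some ++ (u 0).map some ++ (z 0).map some) ::
        (List.range n).map (fun i =>
          (y (i+1)).map some ++ (u (i+1)).map some ++ (z (i+1)).map some) := by
  rw [map_range_succ]

lemma mrsV (n : ℕ) (y z : ℕ → List α) :
    (List.range (n+1)).map (fun i => (z i).map some ++ [none] ++ (y (i+1)).map some)
      = ((z 0).map some ++ [none] ++ (y 1).map some) ::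
        (List.range n).map (fun i =>
          (z (i+1)).map some ++ [none] ++ (y (i+2)).map some) := by
  rw [map_range_succ]

lemma rk_intercalate (n : ℕ) (u : ℕ → List α) :
    rk (List.intercalate [none] ((List.range (n+1)).map fun i => (u i).map some)) = n := by
  induction n generalizing u with
  | zero => simp [List.intercalate, List.range_succ]
  | succ n ih =>
    rw [mrs1 (n+1) u, intercalate_cons' _ _ _ (by simp)]
    simp [ih (fun i => u (i+1))]

lemma keyH (n : ℕ) (y z u : ℕ → List α) :
    (y 0).map some ++
      substG (List.intercalate [none] ((List.range (n+1)).map fun i => (u i).map some))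
        ((List.range n).map fun i => (z i).map some ++ [none] ++ (y (i+1)).map some) ++
      (z n).map some
    = List.intercalate [none] ((List.range (n+1)).map fun i =>
        (y i).map some ++ (u i).map some ++ (z i).map some) := by
  induction n generalizing y z u with
  | zero => simp [List.intercalate, List.range_succ]
  | succ n ih =>
    have ih' : (y 1).map some ++
        substG (List.intercalate [none] ((List.range (n+1)).map fun i => (u (i+1)).map some))
          ((List.range n).map fun i => (z (i+1)).map some ++ [none] ++ (y (i+2)).map some) ++
        (z (n+1)).map some
      = List.intercalate [none] ((List.range (n+1)).map fun i =>
          (y (i+1)).map some ++ (u (i+1)).map some ++ (z (i+1)).map some) :=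
      ih (fun i => y (i+1)) (fun i => z (i+1)) (fun i => u (i+1))
    have hs : ∀ (r v : List (Option α)) (V : List (List (Option α))),
        substG (none :: r) (v :: V) = v ++ substG r V := fun _ _ _ => rfl
    rw [mrs1 (n+1) u, intercalate_cons' _ _ _ (by simp),
      mrs3 (n+1) y u z, intercalate_cons' _ _ _ (by simp),
      mrsV n y z, substG_sepfree_left, hs, ← ih']
    simp [List.append_assoc]

end Aux

/-- The map `F(γ) = y₁ · (γ ⊗ (z₁1y₂, …, z_{l−1}1y_l)) · z_l` (indices shifted to
`0, …, l−1`). -/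
def Fmap {α : Type*} (l : ℕ) (y z : ℕ → List α) (γ : List (Option α)) :
    List (Option α) :=
  (y 0).map some ++
    substG γ ((List.range (l - 1)).map fun i =>
      (z i).map some ++ [none] ++ (y (i + 1)).map some) ++
    (z (l - 1)).map some

/-- the `p`-fold iterate of `F` on a word of rank `l − 1` equals
`y₁ᵖ · (γ ⊗ (z₁ᵖ1y₂ᵖ, …, z_{l−1}ᵖ1y_lᵖ)) · z_lᵖ`; in particular, applied to
`γ = u₁1u₂1…1u_l` it yields `y₁ᵖu₁z₁ᵖ 1 y₂ᵖu₂z₂ᵖ 1 … 1 y_lᵖu_lz_lᵖ`. -/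
theorem iterate_Fmap {α : Type*} (l : ℕ) (hl : 1 ≤ l) (y z u : ℕ → List α)
    (p : ℕ) :
    (∀ γ : List (Option α), rk γ = l - 1 →
      (Fmap l y z)^[p] γ =
        (wpow (y 0) p).map some ++
          substG γ ((List.range (l - 1)).map fun i =>
            (wpow (z i) p).map some ++ [none] ++ (wpow (y (i + 1)) p).map some) ++
          (wpow (z (l - 1)) p).map some) ∧
    (Fmap l y z)^[p]
        (List.intercalate [none] ((List.range l).map fun i => (u i).map some)) =
      List.intercalate [none] ((List.range l).map fun i =>
        (wpow (y i) p).map some ++ (u i).map some ++ (wpow (z i) p).map some) := by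
  have part1 : ∀ γ : List (Option α), rk γ = l - 1 →
      (Fmap l y z)^[p] γ =
        (wpow (y 0) p).map some ++
          substG γ ((List.range (l - 1)).map fun i =>
            (wpow (z i) p).map some ++ [none] ++ (wpow (y (i + 1)) p).map some) ++
          (wpow (z (l - 1)) p).map some := by
    induction p with
    | zero =>
      intro γ hγ
      simp only [Function.iterate_zero, id_eq, wpow_zero, List.map_nil, List.nil_append,
        List.append_nil]
      rw [substG_ones]
      intro v hv
      simp only [List.mem_map, List.mem_range] at hv
      obtain ⟨i, _, rfl⟩ := hv
      rfl
    | succ p ih =>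
      intro γ hγ
      have hV1len : ((List.range (l - 1)).map fun i =>
          (z i).map some ++ [none] ++ (y (i + 1)).map some).length = l - 1 := by simp
      have hV1rk : ∀ v ∈ (List.range (l - 1)).map fun i =>
          (z i).map some ++ [none] ++ (y (i + 1)).map some, rk v = 1 := by
        intro v hv
        simp only [List.mem_map, List.mem_range] at hv
        obtain ⟨i, _, rfl⟩ := hv
        simp
      have h1 : rk (substG γ ((List.range (l - 1)).map fun i =>
          (z i).map some ++ [none] ++ (y (i + 1)).map some)) = l - 1 := by
        rw [rk_substG _ _ (by rw [hγ, hV1len]) hV1rk, hV1len]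
      have hrkF : rk (Fmap l y z γ) = l - 1 := by
        unfold Fmap
        rw [rk_append, rk_append, rk_map_some, rk_map_some, h1]
        omega
      rw [Function.iterate_succ_apply, ih _ hrkF]
      have hVplen : ((List.range (l - 1)).map fun i =>
          (wpow (z i) p).map some ++ [none] ++ (wpow (y (i + 1)) p).map some).length
            = l - 1 := by simp
      have h2 : substG (Fmap l y z γ) ((List.range (l - 1)).map fun i =>
            (wpow (z i) p).map some ++ [none] ++ (wpow (y (i + 1)) p).map some)
          = (y 0).map some ++
            (substG (substG γ ((List.range (l - 1)).map fun i =>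
              (z i).map some ++ [none] ++ (y (i + 1)).map some))
              ((List.range (l - 1)).map fun i =>
                (wpow (z i) p).map some ++ [none] ++ (wpow (y (i + 1)) p).map some) ++
            (z (l - 1)).map some) := by
        unfold Fmap
        rw [List.append_assoc, substG_sepfree_left, substG_append, h1,
          List.take_of_length_le (le_of_eq hVplen), substG_sepfree]
      rw [h2]
      have h3 : substG (substG γ ((List.range (l - 1)).map fun i =>
            (z i).map some ++ [none] ++ (y (i + 1)).map some))
            ((List.range (l - 1)).map fun i =>
              (wpow (z i) p).map some ++ [none] ++ (wpow (y (i + 1)) p).map some)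
          = substG γ ((List.range (l - 1)).map fun i =>
            (wpow (z i) (p+1)).map some ++ [none] ++ (wpow (y (i + 1)) (p+1)).map some) := by
        rw [substG_substG _ _ _ (by rw [hγ, hV1len]) (by rw [hV1len, hVplen]) hV1rk,
          zipWith_map_range]
        congr 1
        apply List.map_congr_left
        intro i _
        rw [List.append_assoc, substG_sepfree_left]
        have : substG ([none] ++ (y (i+1)).map some)
            [(wpow (z i) p).map some ++ [none] ++ (wpow (y (i + 1)) p).map some]
            = ((wpow (z i) p).map some ++ [none] ++ (wpow (y (i + 1)) p).map some)
              ++ (y (i+1)).map some := by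
          show substG (none :: (y (i+1)).map some) _ = _
          simp [substG]
        rw [this, wpow_succ (z i) p, wpow_succ' (y (i+1)) p]
        simp [List.append_assoc]
      rw [h3, wpow_succ' (y 0) p, wpow_succ (z (l - 1)) p]
      simp [List.append_assoc]
  refine ⟨part1, ?_⟩
  obtain ⟨n, rfl⟩ : ∃ n, l = n + 1 := ⟨l - 1, (Nat.succ_pred_eq_of_pos hl).symm⟩
  rw [part1 _ (by simpa using rk_intercalate n u)]
  have := keyH n (fun i => wpow (y i) p) (fun i => wpow (z i) p) u
  simpa using this
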